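/- Let Y = ((A₁;A₂);(B₁;B₂)) be a 2×2×2×2 tensor over F = ℝ or ℂ. If the 2×2×2 tensor (A₁;A₂) has rank at most 2, then rank_F(Y) ≤ 4. -/

import Mathlib

open Matrix BigOperators

/-- Cayley hyperdeterminant (up to sign) of a 2×2×2 tensor given by matrix slices A, B. -/
noncomputable def Delta {F : Type*} [Field F] (A B : Matrix (Fin 2) (Fin 2) F) : F :=
  ((A + B).det - (A - B).det) ^ 2 / 4 - 4 * A.det * B.det

/-- Rank of a 2×2×2 tensor, given as a pair of 2×2 matrix slices. -/
noncomputable def trank3 {F : Type*} [Field F] (T : Fin 2 → Matrix (Fin 2) (Fin 2) F) : ℕ :=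
  sInf {r | ∃ u v w : Fin r → Fin 2 → F, ∀ k i j, T k i j = ∑ s, u s k * v s i * w s j}

/-- Rank of a 2×2×2×2 tensor, given as a 2×2 array of 2×2 matrix slices. -/
noncomputable def trank4 {F : Type*} [Field F] (T : Fin 2 → Fin 2 → Matrix (Fin 2) (Fin 2) F) : ℕ :=
  sInf {r | ∃ u v w z : Fin r → Fin 2 → F,
    ∀ k l i j, T k l i j = ∑ s, u s k * v s l * w s i * z s j}

/-- The 2×2 matrix with columns u and v. -/
def col2 {F : Type*} [Field F] (u v : Fin 2 → F) : Matrix (Fin 2) (Fin 2) F :=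
  Matrix.of fun i j => ![u, v] j i

variable {F : Type*} [Field F] [CharZero F]

/-- 2x2 determinant of a function-matrix. -/
def d2' (M : Fin 2 → Fin 2 → F) : F := M 0 0 * M 1 1 - M 0 1 * M 1 0

/-- Polarization of the determinant. -/
def mp' (C D : Fin 2 → Fin 2 → F) : F :=
  d2' (fun i j => C i j + D i j) - d2' C - d2' D

/-- Discriminant of the pencil. -/
def Dlt' (C D : Fin 2 → Fin 2 → F) : F := (mp' C D)^2 - 4 * d2' C * d2' D

lemma rank1_of_det (M : Fin 2 → Fin 2 → F) (h : d2' M = 0) :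
    ∃ x y : Fin 2 → F, ∀ i j, M i j = x i * y j := by
  simp only [d2'] at h
  by_cases h00 : M 0 0 = 0
  · by_cases h11 : M 1 1 = 0
    · have h2 : M 0 1 = 0 ∨ M 1 0 = 0 := by
        have : M 0 1 * M 1 0 = 0 := by linear_combination h00 * M 1 1 - h
        exact mul_eq_zero.mp this
      rcases h2 with h2 | h2
      · refine ⟨![0, 1], ![M 1 0, 0], ?_⟩
        intro i j; fin_cases i <;> fin_cases j <;> simp [h00, h11, h2]
      · refine ⟨![1, 0], ![0, M 0 1], ?_⟩
        intro i j; fin_cases i <;> fin_cases j <;> simp [h00, h11, h2]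
    · refine ⟨![M 0 1, M 1 1], ![M 1 0 / M 1 1, 1], ?_⟩
      intro i j; fin_cases i <;> fin_cases j <;> simp
      · field_simp
        linear_combination h
      · field_simp
  · refine ⟨![M 0 0, M 1 0], ![1, M 0 1 / M 0 0], ?_⟩
    intro i j; fin_cases i <;> fin_cases j <;> simp
    · field_simp
    · field_simp
      linear_combination h

lemma dep2 (a b : Fin 2 → F) (h : a 0 * b 1 - a 1 * b 0 = 0) :
    ∃ (x : Fin 2 → F) (c d : F), (∀ l, a l = c * x l) ∧ (∀ l, b l = d * x l) := by
  by_cases h0 : a 0 = 0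
  · by_cases h1 : a 1 = 0
    · exact ⟨b, 0, 1, fun l => by fin_cases l <;> simp [h0, h1], fun l => by ring_nf⟩
    · refine ⟨a, 1, b 1 / a 1, fun l => by ring_nf, fun l => ?_⟩
      fin_cases l
      · have : b 0 = 0 := by
          have := mul_eq_zero.mp (show a 1 * b 0 = 0 by linear_combination h0 * b 1 - h)
          tauto
        simp [this, h0]
      · simp only [Fin.mk_zero, Fin.mk_one, Fin.isValue]
        field_simp
  · refine ⟨a, 1, b 0 / a 0, fun l => by ring_nf, fun l => ?_⟩
    fin_cases l
    · simp only [Fin.mk_zero, Fin.mk_one, Fin.isValue]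
      field_simp
    · simp only [Fin.mk_zero, Fin.mk_one, Fin.isValue]
      field_simp
      linear_combination h

/-- Rank ≤ 2 decomposition of a 2×2 pencil with "good" discriminant. -/
lemma pencil2 (C D : Fin 2 → Fin 2 → F) (s : F) (hs0 : s ≠ 0) (hs : s^2 = Dlt' C D) :
    ∃ (a₁ a₂ b₁ b₂ : F) (p₁ q₁ p₂ q₂ : Fin 2 → F),
      (∀ i j, C i j = a₁ * p₁ i * q₁ j + a₂ * p₂ i * q₂ j) ∧
      (∀ i j, D i j = b₁ * p₁ i * q₁ j + b₂ * p₂ i * q₂ j) := by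
  have hs' : s^2 = (mp' C D)^2 - 4 * d2' C * d2' D := hs
  by_cases hd : d2' D = 0
  · have hm : mp' C D ≠ 0 := by
      intro h0
      apply hs0
      have : s^2 = 0 := by rw [hs', h0, hd]; ring
      exact pow_eq_zero_iff (n := 2) (by norm_num) |>.mp this
    set lam := -(d2' C) / (mp' C D) with hlam
    have hdet : d2' (fun i j => C i j + lam * D i j) = 0 := by
      have hexp : d2' (fun i j => C i j + lam * D i j)
          = d2' C + lam * mp' C D + lam^2 * d2' D := by
        simp only [d2', mp']; ring
      rw [hexp, hd, hlam]
      field_simp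
      ring
    obtain ⟨x₁, y₁, h₁⟩ := rank1_of_det _ hdet
    obtain ⟨x₂, y₂, h₂⟩ := rank1_of_det _ hd
    refine ⟨1, -lam, 0, 1, x₁, y₁, x₂, y₂, ?_, ?_⟩
    · intro i j
      linear_combination (h₁ i j) - lam * (h₂ i j)
    · intro i j
      linear_combination h₂ i j
  · -- two scaled roots, no division in the root matrices
    obtain ⟨dD, hdD⟩ : ∃ x, x = d2' D := ⟨_, rfl⟩
    obtain ⟨m, hm⟩ : ∃ x, x = mp' C D := ⟨_, rfl⟩
    rw [← hdD] at hd
    have hdne : dD ≠ 0 := hd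
    rw [← hdD, ← hm] at hs'
    have hR₁ : d2' (fun i j => 2*dD * C i j + (-m + s) * D i j) = 0 := by
      have hexp : d2' (fun i j => 2*dD * C i j + (-m + s) * D i j)
          = (2*dD)^2 * d2' C + (2*dD)*(-m+s) * m + (-m+s)^2 * dD := by
        simp only [d2', mp', hdD, hm]; ring
      rw [hexp]
      linear_combination dD * hs'
    have hR₂ : d2' (fun i j => 2*dD * C i j + (-m - s) * D i j) = 0 := by
      have hexp : d2' (fun i j => 2*dD * C i j + (-m - s) * D i j)
          = (2*dD)^2 * d2' C + (2*dD)*(-m-s) * m + (-m-s)^2 * dD := by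
        simp only [d2', mp', hdD, hm]; ring
      rw [hexp]
      linear_combination dD * hs'
    obtain ⟨x₁, y₁, h₁⟩ := rank1_of_det _ hR₁
    obtain ⟨x₂, y₂, h₂⟩ := rank1_of_det _ hR₂
    refine ⟨(m + s)/(4*dD*s), (s - m)/(4*dD*s), 1/(2*s), -(1/(2*s)), x₁, y₁, x₂, y₂, ?_, ?_⟩
    · intro i j
      have key : (4*dD*s) * C i j = (m + s) * (x₁ i * y₁ j) + (s - m) * (x₂ i * y₂ j) := by
        linear_combination (m + s) * (h₁ i j) + (s - m) * (h₂ i j)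
      field_simp
      linear_combination key
    · intro i j
      have key : (2*s) * D i j = (x₁ i * y₁ j) - (x₂ i * y₂ j) := by
        linear_combination (h₁ i j) - (h₂ i j)
      field_simp
      linear_combination key

lemma disj {V : Type*} [AddCommMonoid V] (f g : Fin 2 → V)
    (hf : ¬(f 0 = 0 ∧ f 1 = 0)) (hg : ¬(g 0 = 0 ∧ g 1 = 0)) :
    (f 0 ≠ 0 ∧ g 0 ≠ 0) ∨ (f 1 ≠ 0 ∧ g 1 ≠ 0) ∨ (f 0 + f 1 ≠ 0 ∧ g 0 + g 1 ≠ 0) := by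
  by_cases h1 : f 0 = 0
  · have hf1 : f 1 ≠ 0 := fun h => hf ⟨h1, h⟩
    by_cases h2 : g 1 = 0
    · have hg0 : g 0 ≠ 0 := fun h => hg ⟨h, h2⟩
      right; right
      constructor
      · rw [h1, zero_add]; exact hf1
      · rw [h2, add_zero]; exact hg0
    · right; left; exact ⟨hf1, h2⟩
  · by_cases h2 : g 0 = 0
    · have hg1 : g 1 ≠ 0 := fun h => hg ⟨h2, h⟩
      by_cases h3 : f 1 = 0
      · right; right
        constructor
        · rw [h3, add_zero]; exact h1
        · rw [h2, zero_add]; exact hg1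
      · right; left; exact ⟨h3, hg1⟩
    · left; exact ⟨h1, h2⟩

omit [CharZero F] in
lemma vecne2 {V : Type*} [Zero V] (f : Fin 2 → V) (h : f ≠ 0) : ¬(f 0 = 0 ∧ f 1 = 0) := by
  rintro ⟨h0, h1⟩
  apply h
  funext b
  fin_cases b <;> assumption

omit [CharZero F] in
lemma exists_rank1_pair (G H : Fin 2 → Fin 2 → F)
    (hG : ¬∀ i j, G i j = 0) (hH : ¬∀ i j, H i j = 0) :
    ∃ y z : Fin 2 → F,
      mp' (fun i j => y i * z j) G ≠ 0 ∧ mp' (fun i j => y i * z j) H ≠ 0 := by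
  have hmp : ∀ (K : Fin 2 → Fin 2 → F) (y z : Fin 2 → F),
      mp' (fun i j => y i * z j) K
        = z 0 * (y 0 * K 1 1 - y 1 * K 0 1) + z 1 * (y 1 * K 0 0 - y 0 * K 1 0) := by
    intro K y z; simp only [mp', d2']; ring
  have key : ∀ (K : Fin 2 → Fin 2 → F), (¬∀ i j, K i j = 0) →
      ¬((![![K 1 1, -(K 1 0)], ![-(K 0 1), K 0 0]] : Fin 2 → Fin 2 → F) 0 = 0
        ∧ (![![K 1 1, -(K 1 0)], ![-(K 0 1), K 0 0]] : Fin 2 → Fin 2 → F) 1 = 0) := by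
    intro K hK ⟨p, q⟩
    apply hK
    have p0 := congrFun p 0
    have p1 := congrFun p 1
    have q0 := congrFun q 0
    have q1 := congrFun q 1
    simp at p0 p1 q0 q1
    intro i j
    fin_cases i <;> fin_cases j <;> assumption
  rcases disj (V := Fin 2 → F)
      (![![G 1 1, -(G 1 0)], ![-(G 0 1), G 0 0]])
      (![![H 1 1, -(H 1 0)], ![-(H 0 1), H 0 0]]) (key G hG) (key H hH)
      with ⟨hy1, hy2⟩ | ⟨hy1, hy2⟩ | ⟨hy1, hy2⟩
  · -- y = e₀
    have hvalG : ∀ z : Fin 2 → F, mp' (fun i j => (![(1:F),0]) i * z j) G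
        = z 0 * G 1 1 + z 1 * (-(G 1 0)) := by
      intro z; rw [hmp]; simp; try ring
    have hvalH : ∀ z : Fin 2 → F, mp' (fun i j => (![(1:F),0]) i * z j) H
        = z 0 * H 1 1 + z 1 * (-(H 1 0)) := by
      intro z; rw [hmp]; simp; try ring
    rcases disj (V := F) ![G 1 1, -(G 1 0)] ![H 1 1, -(H 1 0)]
        (by simpa using hy1) (by simpa using hy2) with ⟨h1, h2⟩ | ⟨h1, h2⟩ | ⟨h1, h2⟩
    · exact ⟨![1,0], ![1,0], by rw [hvalG]; simpa using h1, by rw [hvalH]; simpa using h2⟩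
    · exact ⟨![1,0], ![0,1], by rw [hvalG]; simpa using h1, by rw [hvalH]; simpa using h2⟩
    · exact ⟨![1,0], ![1,1], by rw [hvalG]; simpa using h1, by rw [hvalH]; simpa using h2⟩
  · -- y = e₁
    have hvalG : ∀ z : Fin 2 → F, mp' (fun i j => (![(0:F),1]) i * z j) G
        = z 0 * (-(G 0 1)) + z 1 * G 0 0 := by
      intro z; rw [hmp]; simp; try ring
    have hvalH : ∀ z : Fin 2 → F, mp' (fun i j => (![(0:F),1]) i * z j) H
        = z 0 * (-(H 0 1)) + z 1 * H 0 0 := by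
      intro z; rw [hmp]; simp; try ring
    rcases disj (V := F) ![-(G 0 1), G 0 0] ![-(H 0 1), H 0 0]
        (by simpa using hy1) (by simpa using hy2) with ⟨h1, h2⟩ | ⟨h1, h2⟩ | ⟨h1, h2⟩
    · exact ⟨![0,1], ![1,0], by rw [hvalG]; simpa using h1, by rw [hvalH]; simpa using h2⟩
    · exact ⟨![0,1], ![0,1], by rw [hvalG]; simpa using h1, by rw [hvalH]; simpa using h2⟩
    · exact ⟨![0,1], ![1,1], by rw [hvalG]; simpa using h1, by rw [hvalH]; simpa using h2⟩
  · -- y = (1,1)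
    have hvalG : ∀ z : Fin 2 → F, mp' (fun i j => (![(1:F),1]) i * z j) G
        = z 0 * (G 1 1 + -(G 0 1)) + z 1 * (-(G 1 0) + G 0 0) := by
      intro z; rw [hmp]; simp; try ring
    have hvalH : ∀ z : Fin 2 → F, mp' (fun i j => (![(1:F),1]) i * z j) H
        = z 0 * (H 1 1 + -(H 0 1)) + z 1 * (-(H 1 0) + H 0 0) := by
      intro z; rw [hmp]; simp; try ring
    rcases disj (V := F) ![G 1 1 + -(G 0 1), -(G 1 0) + G 0 0]
        ![H 1 1 + -(H 0 1), -(H 1 0) + H 0 0]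
        (by simpa using hy1) (by simpa using hy2) with ⟨h1, h2⟩ | ⟨h1, h2⟩ | ⟨h1, h2⟩
    · exact ⟨![1,1], ![1,0], by rw [hvalG]; simpa using h1, by rw [hvalH]; simpa using h2⟩
    · exact ⟨![1,1], ![0,1], by rw [hvalG]; simpa using h1, by rw [hvalH]; simpa using h2⟩
    · exact ⟨![1,1], ![1,1], by rw [hvalG]; simpa using h1, by rw [hvalH]; simpa using h2⟩

omit [CharZero F] in
lemma Dlt_quartic (a1 a2 b1 b2 : Fin 2 → Fin 2 → F) (t : F) :
    Dlt' (fun i j => b1 i j + t * a1 i j) (fun i j => b2 i j + t * a2 i j)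
      = ((mp' a1 a2)^2 - 4 * d2' a1 * d2' a2) * t^4
        + (2 * (mp' a1 a2) * (mp' b1 a2 + mp' a1 b2)
            - 4 * (d2' a1 * mp' b2 a2 + mp' b1 a1 * d2' a2)) * t^3
        + ((mp' b1 a2 + mp' a1 b2)^2 + 2 * mp' a1 a2 * mp' b1 b2
            - 4 * (d2' a1 * d2' b2 + mp' b1 a1 * mp' b2 a2 + d2' b1 * d2' a2)) * t^2
        + (2 * (mp' b1 a2 + mp' a1 b2) * mp' b1 b2
            - 4 * (mp' b1 a1 * d2' b2 + d2' b1 * mp' b2 a2)) * t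
        + ((mp' b1 b2)^2 - 4 * d2' b1 * d2' b2) := by
  simp only [Dlt', mp', d2']; ring

omit [CharZero F] in
lemma hyperdet (u v w : Fin 2 → Fin 2 → F) :
    (mp' (fun i j => u 0 0 * v 0 i * w 0 j + u 1 0 * v 1 i * w 1 j)
         (fun i j => u 0 1 * v 0 i * w 0 j + u 1 1 * v 1 i * w 1 j))^2
      - 4 * d2' (fun i j => u 0 0 * v 0 i * w 0 j + u 1 0 * v 1 i * w 1 j)
          * d2' (fun i j => u 0 1 * v 0 i * w 0 j + u 1 1 * v 1 i * w 1 j)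
      = ((u 0 0 * u 1 1 - u 0 1 * u 1 0) * (v 0 0 * v 1 1 - v 0 1 * v 1 0)
          * (w 0 0 * w 1 1 - w 0 1 * w 1 0))^2 := by
  simp only [mp', d2']; ring

omit [CharZero F] in
lemma Dlt_quad (P P' : Fin 2 → Fin 2 → F) (y z : Fin 2 → F) (s : F) :
    Dlt' (fun i j => P i j - s * (y i * z j)) P'
      = (mp' (fun i j => y i * z j) P')^2 * s^2
        + (4 * mp' P (fun i j => y i * z j) * d2' P'
            - 2 * mp' P P' * mp' (fun i j => y i * z j) P') * s
        + Dlt' P P' := by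
  simp only [Dlt', mp', d2']; ring

omit [CharZero F] in
lemma Dlt_rank1 (G : Fin 2 → Fin 2 → F) (y z : Fin 2 → F) (t : F) :
    Dlt' G (fun i j => t * (y i * z j)) = (t * mp' (fun i j => y i * z j) G)^2 := by
  simp only [Dlt', mp', d2']; ring

/-- Degenerate case: the first slice pair is concentrated, `T 0 l i j = x l * G i j`. -/
lemma deg_core (Good : F → Prop)
    (h_sq : ∀ x : F, x ≠ 0 → Good (x^2))
    (h_sqrt : ∀ x : F, Good x → ∃ s : F, s ≠ 0 ∧ s^2 = x)
    (h_q2 : ∀ c2 c1 c0 : F, Good c2 → ∃ t : F, t ≠ 0 ∧ Good (c2*t^2 + c1*t + c0))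
    (T : Fin 2 → Fin 2 → Fin 2 → Fin 2 → F) (x : Fin 2 → F) (G : Fin 2 → Fin 2 → F)
    (hA : ∀ l i j, T 0 l i j = x l * G i j) :
    ∃ uu vv ww zz : Fin 4 → Fin 2 → F,
      ∀ k l i j, T k l i j = ∑ s, uu s k * vv s l * ww s i * zz s j := by
  by_cases h0 : ∀ l i j, T 0 l i j = 0
  · -- only the second slice matters; it needs at most 4 terms
    refine ⟨![![0,1],![0,1],![0,1],![0,1]], ![![1,0],![1,0],![0,1],![0,1]],
      ![fun i => T 1 0 i 0, fun i => T 1 0 i 1, fun i => T 1 1 i 0, fun i => T 1 1 i 1],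
      ![![1,0],![0,1],![1,0],![0,1]], ?_⟩
    intro k l i j
    fin_cases k <;> fin_cases l <;> fin_cases j <;>
        simp only [Fin.sum_univ_four, Fin.mk_zero, Fin.mk_one, Fin.isValue, Matrix.cons_val_zero, Matrix.cons_val_one, Matrix.head_cons, Matrix.cons_val_two, Matrix.tail_cons, Matrix.cons_val_three] <;>
      first
        | (rw [h0]; ring)
        | ring
  · have hGne : ¬∀ i j, G i j = 0 := by
      intro hg; exact h0 (fun l i j => by rw [hA, hg]; ring)
    have hxne : x 0 ≠ 0 ∨ x 1 ≠ 0 := by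
      by_contra hc
      push_neg at hc
      refine h0 (fun l i j => ?_)
      rw [hA]
      fin_cases l
      · show x 0 * G i j = 0
        rw [hc.1]; ring
      · show x 1 * G i j = 0
        rw [hc.2]; ring
    obtain ⟨x', hD⟩ : ∃ x' : Fin 2 → F, x 0 * x' 1 - x 1 * x' 0 ≠ 0 := by
      rcases hxne with h | h
      · exact ⟨![0,1], by simpa using h⟩
      · refine ⟨![1,0], ?_⟩
        simpa using fun hh => h (by linear_combination hh)
    set P : Fin 2 → Fin 2 → F :=
      fun i j => (x' 1 * T 1 0 i j - x' 0 * T 1 1 i j) / (x 0 * x' 1 - x 1 * x' 0) with hP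
    set P' : Fin 2 → Fin 2 → F :=
      fun i j => (x 0 * T 1 1 i j - x 1 * T 1 0 i j) / (x 0 * x' 1 - x 1 * x' 0) with hP'
    have hB : ∀ l i j, T 1 l i j = x l * P i j + x' l * P' i j := by
      intro l i j
      fin_cases l <;>
      · simp only [hP, hP', Fin.mk_zero, Fin.mk_one, Fin.isValue]
        rw [mul_div_assoc', mul_div_assoc', ← add_div, eq_div_iff hD]
        ring
    by_cases hP'0 : ∀ i j, P' i j = 0
    · -- T = x ⊗ (pencil of G and P)
      refine ⟨![![1,0],![1,0],![0,1],![0,1]], ![x,x,x,x],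
        ![fun i => G i 0, fun i => G i 1, fun i => P i 0, fun i => P i 1],
        ![![1,0],![0,1],![1,0],![0,1]], ?_⟩
      intro k l i j
      have hBP : ∀ l i j, T 1 l i j = x l * P i j := by
        intro l i j; rw [hB, hP'0]; ring
      fin_cases k <;> fin_cases j <;>
          simp only [Fin.sum_univ_four, Fin.mk_zero, Fin.mk_one, Fin.isValue, Matrix.cons_val_zero, Matrix.cons_val_one, Matrix.head_cons, Matrix.cons_val_two, Matrix.tail_cons, Matrix.cons_val_three] <;>
        first
          | (rw [hA]; ring)
          | (rw [hBP]; ring)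
    · obtain ⟨y, z, hmG, hmP'⟩ := exists_rank1_pair G P' hGne hP'0
      obtain ⟨t, ht0, htg⟩ := h_q2 ((mp' (fun i j => y i * z j) P')^2)
        (4 * mp' P (fun i j => y i * z j) * d2' P'
            - 2 * mp' P P' * mp' (fun i j => y i * z j) P')
        (Dlt' P P') (h_sq _ hmP')
      rw [← Dlt_quad P P' y z t] at htg
      obtain ⟨s2, hs20, hs2sq⟩ := h_sqrt _ htg
      obtain ⟨a₁', a₂', b₁', b₂', p₁', q₁', p₂', q₂', hQ, hP'dec⟩ :=
        pencil2 (fun i j => P i j - t * (y i * z j)) P' s2 hs20 hs2sq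
      have hs10 : t * mp' (fun i j => y i * z j) G ≠ 0 := mul_ne_zero ht0 hmG
      obtain ⟨a₁, a₂, b₁, b₂, p₁, q₁, p₂, q₂, hGdec, hXdec⟩ :=
        pencil2 G (fun i j => t * (y i * z j)) _ hs10 (Dlt_rank1 G y z t).symm
      refine ⟨![![a₁,b₁],![a₂,b₂],![0,1],![0,1]],
        ![x, x, fun l => a₁' * x l + b₁' * x' l, fun l => a₂' * x l + b₂' * x' l],
        ![p₁, p₂, p₁', p₂'], ![q₁, q₂, q₁', q₂'], ?_⟩
      intro k l i j
      have hQ' : ∀ i j, P i j - t * (y i * z j)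
          = a₁' * p₁' i * q₁' j + a₂' * p₂' i * q₂' j := fun i j => hQ i j
      have hX' : ∀ i j, t * (y i * z j)
          = b₁ * p₁ i * q₁ j + b₂ * p₂ i * q₂ j := fun i j => hXdec i j
      fin_cases k <;>
        simp only [Fin.sum_univ_four, Fin.mk_zero, Fin.mk_one, Fin.isValue, Matrix.cons_val_zero, Matrix.cons_val_one, Matrix.head_cons, Matrix.cons_val_two, Matrix.tail_cons, Matrix.cons_val_three]
      · linear_combination hA l i j + x l * hGdec i j
      · linear_combination hB l i j + x l * hX' i j + x l * hQ' i j + x' l * hP'dec i j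

/-- Main case: the first slice pair has an essentially unique rank-2 decomposition. -/
lemma main_core (Good : F → Prop)
    (h_sq : ∀ x : F, x ≠ 0 → Good (x^2))
    (h_sqrt : ∀ x : F, Good x → ∃ s : F, s ≠ 0 ∧ s^2 = x)
    (h_q4 : ∀ c4 c3 c2 c1 c0 : F, Good c4 →
      ∃ t : F, Good (c4*t^4 + c3*t^3 + c2*t^2 + c1*t + c0))
    (T : Fin 2 → Fin 2 → Fin 2 → Fin 2 → F) (u v w : Fin 2 → Fin 2 → F)
    (hA : ∀ l i j, T 0 l i j = u 0 l * v 0 i * w 0 j + u 1 l * v 1 i * w 1 j)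
    (hUVW : (u 0 0 * u 1 1 - u 0 1 * u 1 0) * (v 0 0 * v 1 1 - v 0 1 * v 1 0)
        * (w 0 0 * w 1 1 - w 0 1 * w 1 0) ≠ 0) :
    ∃ uu vv ww zz : Fin 4 → Fin 2 → F,
      ∀ k l i j, T k l i j = ∑ s, uu s k * vv s l * ww s i * zz s j := by
  have hgood : Good ((mp' (fun i j => u 0 0 * v 0 i * w 0 j + u 1 0 * v 1 i * w 1 j)
      (fun i j => u 0 1 * v 0 i * w 0 j + u 1 1 * v 1 i * w 1 j))^2
      - 4 * d2' (fun i j => u 0 0 * v 0 i * w 0 j + u 1 0 * v 1 i * w 1 j)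
        * d2' (fun i j => u 0 1 * v 0 i * w 0 j + u 1 1 * v 1 i * w 1 j)) := by
    rw [hyperdet u v w]
    exact h_sq _ hUVW
  obtain ⟨t, htg⟩ := h_q4 _
    (2 * (mp' (fun i j => u 0 0 * v 0 i * w 0 j + u 1 0 * v 1 i * w 1 j)
          (fun i j => u 0 1 * v 0 i * w 0 j + u 1 1 * v 1 i * w 1 j))
        * (mp' (fun i j => T 1 0 i j) (fun i j => u 0 1 * v 0 i * w 0 j + u 1 1 * v 1 i * w 1 j)
          + mp' (fun i j => u 0 0 * v 0 i * w 0 j + u 1 0 * v 1 i * w 1 j) (fun i j => T 1 1 i j))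
      - 4 * (d2' (fun i j => u 0 0 * v 0 i * w 0 j + u 1 0 * v 1 i * w 1 j)
            * mp' (fun i j => T 1 1 i j) (fun i j => u 0 1 * v 0 i * w 0 j + u 1 1 * v 1 i * w 1 j)
          + mp' (fun i j => T 1 0 i j) (fun i j => u 0 0 * v 0 i * w 0 j + u 1 0 * v 1 i * w 1 j)
            * d2' (fun i j => u 0 1 * v 0 i * w 0 j + u 1 1 * v 1 i * w 1 j)))
    ((mp' (fun i j => T 1 0 i j) (fun i j => u 0 1 * v 0 i * w 0 j + u 1 1 * v 1 i * w 1 j)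
        + mp' (fun i j => u 0 0 * v 0 i * w 0 j + u 1 0 * v 1 i * w 1 j) (fun i j => T 1 1 i j))^2
      + 2 * mp' (fun i j => u 0 0 * v 0 i * w 0 j + u 1 0 * v 1 i * w 1 j)
          (fun i j => u 0 1 * v 0 i * w 0 j + u 1 1 * v 1 i * w 1 j)
        * mp' (fun i j => T 1 0 i j) (fun i j => T 1 1 i j)
      - 4 * (d2' (fun i j => u 0 0 * v 0 i * w 0 j + u 1 0 * v 1 i * w 1 j) * d2' (fun i j => T 1 1 i j)
          + mp' (fun i j => T 1 0 i j) (fun i j => u 0 0 * v 0 i * w 0 j + u 1 0 * v 1 i * w 1 j)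
            * mp' (fun i j => T 1 1 i j) (fun i j => u 0 1 * v 0 i * w 0 j + u 1 1 * v 1 i * w 1 j)
          + d2' (fun i j => T 1 0 i j) * d2' (fun i j => u 0 1 * v 0 i * w 0 j + u 1 1 * v 1 i * w 1 j)))
    (2 * (mp' (fun i j => T 1 0 i j) (fun i j => u 0 1 * v 0 i * w 0 j + u 1 1 * v 1 i * w 1 j)
        + mp' (fun i j => u 0 0 * v 0 i * w 0 j + u 1 0 * v 1 i * w 1 j) (fun i j => T 1 1 i j))
        * mp' (fun i j => T 1 0 i j) (fun i j => T 1 1 i j)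
      - 4 * (mp' (fun i j => T 1 0 i j) (fun i j => u 0 0 * v 0 i * w 0 j + u 1 0 * v 1 i * w 1 j)
            * d2' (fun i j => T 1 1 i j)
          + d2' (fun i j => T 1 0 i j)
            * mp' (fun i j => T 1 1 i j) (fun i j => u 0 1 * v 0 i * w 0 j + u 1 1 * v 1 i * w 1 j)))
    ((mp' (fun i j => T 1 0 i j) (fun i j => T 1 1 i j))^2
      - 4 * d2' (fun i j => T 1 0 i j) * d2' (fun i j => T 1 1 i j))
    hgood
  rw [← Dlt_quartic (fun i j => u 0 0 * v 0 i * w 0 j + u 1 0 * v 1 i * w 1 j)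
      (fun i j => u 0 1 * v 0 i * w 0 j + u 1 1 * v 1 i * w 1 j)
      (fun i j => T 1 0 i j) (fun i j => T 1 1 i j) t] at htg
  obtain ⟨s2, hs20, hs2sq⟩ := h_sqrt _ htg
  obtain ⟨a₁, a₂, b₁, b₂, p₁, q₁, p₂, q₂, hC, hD⟩ :=
    pencil2 (fun i j => T 1 0 i j + t * (u 0 0 * v 0 i * w 0 j + u 1 0 * v 1 i * w 1 j))
      (fun i j => T 1 1 i j + t * (u 0 1 * v 0 i * w 0 j + u 1 1 * v 1 i * w 1 j))
      s2 hs20 hs2sq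
  refine ⟨![![1, -t], ![1, -t], ![0,1], ![0,1]],
    ![fun l => u 0 l, fun l => u 1 l, ![a₁, b₁], ![a₂, b₂]],
    ![fun i => v 0 i, fun i => v 1 i, p₁, p₂],
    ![fun j => w 0 j, fun j => w 1 j, q₁, q₂], ?_⟩
  intro k l i j
  have hC' : ∀ i j, T 1 0 i j + t * (u 0 0 * v 0 i * w 0 j + u 1 0 * v 1 i * w 1 j)
      = a₁ * p₁ i * q₁ j + a₂ * p₂ i * q₂ j := fun i j => hC i j
  have hD' : ∀ i j, T 1 1 i j + t * (u 0 1 * v 0 i * w 0 j + u 1 1 * v 1 i * w 1 j)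
      = b₁ * p₁ i * q₁ j + b₂ * p₂ i * q₂ j := fun i j => hD i j
  fin_cases k <;> fin_cases l <;>
    simp only [Fin.sum_univ_four, Fin.mk_zero, Fin.mk_one, Fin.isValue, Matrix.cons_val_zero,
      Matrix.cons_val_one, Matrix.head_cons, Matrix.cons_val_two, Matrix.tail_cons,
      Matrix.cons_val_three]
  · linear_combination hA 0 i j
  · linear_combination hA 1 i j
  · linear_combination hC' i j
  · linear_combination hD' i j

omit [CharZero F] in
/-- From `trank3 ≤ 2`, extract an honest two-term decomposition. -/
lemma extract2 (A₁ A₂ : Matrix (Fin 2) (Fin 2) F) (h : trank3 ![A₁, A₂] ≤ 2) :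
    ∃ u v w : Fin 2 → Fin 2 → F, ∀ l i j,
      (![A₁, A₂] : Fin 2 → Matrix (Fin 2) (Fin 2) F) l i j
        = u 0 l * v 0 i * w 0 j + u 1 l * v 1 i * w 1 j := by
  have h4 : (4:ℕ) ∈ {r | ∃ u v w : Fin r → Fin 2 → F, ∀ k i j,
      (![A₁, A₂] : Fin 2 → Matrix (Fin 2) (Fin 2) F) k i j = ∑ s, u s k * v s i * w s j} := by
    refine ⟨fun s k => (![A₁, A₂] : Fin 2 → Matrix (Fin 2) (Fin 2) F) k (![0,0,1,1] s) (![0,1,0,1] s),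
      ![![1,0],![1,0],![0,1],![0,1]], ![![1,0],![0,1],![1,0],![0,1]], ?_⟩
    intro k i j
    fin_cases i <;> fin_cases j <;>
      simp only [Fin.sum_univ_four, Fin.mk_zero, Fin.mk_one, Fin.isValue, Matrix.cons_val_zero,
        Matrix.cons_val_one, Matrix.head_cons, Matrix.cons_val_two, Matrix.tail_cons,
        Matrix.cons_val_three] <;>
      ring
  obtain ⟨r, hmem, hr2⟩ : ∃ r, r ∈ {r | ∃ u v w : Fin r → Fin 2 → F, ∀ k i j,
      (![A₁, A₂] : Fin 2 → Matrix (Fin 2) (Fin 2) F) k i j = ∑ s, u s k * v s i * w s j}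
      ∧ r ≤ 2 := ⟨_, Nat.sInf_mem ⟨4, h4⟩, h⟩
  interval_cases r
  · obtain ⟨u, v, w, hd⟩ := hmem
    refine ⟨fun _ _ => 0, fun _ _ => 0, fun _ _ => 0, fun l i j => ?_⟩
    have := hd l i j
    simpa using this
  · obtain ⟨u, v, w, hd⟩ := hmem
    refine ⟨![u 0, fun _ => 0], ![v 0, fun _ => 0], ![w 0, fun _ => 0], fun l i j => ?_⟩
    have := hd l i j
    rw [Fin.sum_univ_one] at this
    simp only [Matrix.cons_val_zero, Matrix.cons_val_one, Matrix.head_cons]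
    linear_combination this
  · obtain ⟨u, v, w, hd⟩ := hmem
    refine ⟨u, v, w, fun l i j => ?_⟩
    have := hd l i j
    rw [Fin.sum_univ_two] at this
    linear_combination this

/-- The master lemma. -/
lemma master (Good : F → Prop)
    (h_sq : ∀ x : F, x ≠ 0 → Good (x^2))
    (h_sqrt : ∀ x : F, Good x → ∃ s : F, s ≠ 0 ∧ s^2 = x)
    (h_q2 : ∀ c2 c1 c0 : F, Good c2 → ∃ t : F, t ≠ 0 ∧ Good (c2*t^2 + c1*t + c0))
    (h_q4 : ∀ c4 c3 c2 c1 c0 : F, Good c4 →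
      ∃ t : F, Good (c4*t^4 + c3*t^3 + c2*t^2 + c1*t + c0))
    (A₁ A₂ B₁ B₂ : Matrix (Fin 2) (Fin 2) F)
    (h3 : trank3 ![A₁, A₂] ≤ 2) : trank4 ![![A₁, A₂], ![B₁, B₂]] ≤ 4 := by
  obtain ⟨u, v, w, hA⟩ := extract2 A₁ A₂ h3
  have hA' : ∀ l i j, (![![A₁, A₂], ![B₁, B₂]] :
      Fin 2 → Fin 2 → Matrix (Fin 2) (Fin 2) F) 0 l i j
      = u 0 l * v 0 i * w 0 j + u 1 l * v 1 i * w 1 j := by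
    intro l i j
    simpa using hA l i j
  suffices hsuf : ∃ uu vv ww zz : Fin 4 → Fin 2 → F, ∀ k l i j,
      (![![A₁, A₂], ![B₁, B₂]] : Fin 2 → Fin 2 → Matrix (Fin 2) (Fin 2) F) k l i j
        = ∑ s, uu s k * vv s l * ww s i * zz s j by
    obtain ⟨uu, vv, ww, zz, hh⟩ := hsuf
    exact Nat.sInf_le ⟨uu, vv, ww, zz, hh⟩
  by_cases hU : u 0 0 * u 1 1 - u 0 1 * u 1 0 = 0
  · obtain ⟨xx, c, d, hc, hd⟩ := dep2 (u 0) (u 1) hU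
    exact deg_core Good h_sq h_sqrt h_q2 _ xx
      (fun i j => c * (v 0 i * w 0 j) + d * (v 1 i * w 1 j))
      (fun l i j => by rw [hA' l i j, hc l, hd l]; ring)
  by_cases hV : v 0 0 * v 1 1 - v 0 1 * v 1 0 = 0
  · obtain ⟨xx, c, d, hc, hd⟩ := dep2 (v 0) (v 1) hV
    obtain ⟨uu, vv, ww, zz, hh⟩ := deg_core Good h_sq h_sqrt h_q2
      (fun k a b c' => (![![A₁, A₂], ![B₁, B₂]] :
        Fin 2 → Fin 2 → Matrix (Fin 2) (Fin 2) F) k b a c') xx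
      (fun l j => c * (u 0 l * w 0 j) + d * (u 1 l * w 1 j))
      (fun a b c' => by
        show (![![A₁, A₂], ![B₁, B₂]] : Fin 2 → Fin 2 → Matrix (Fin 2) (Fin 2) F) 0 b a c'
          = xx a * (c * (u 0 b * w 0 c') + d * (u 1 b * w 1 c'))
        rw [hA' b a c', hc a, hd a]; ring)
    refine ⟨uu, ww, vv, zz, fun k l i j => ?_⟩
    rw [show (![![A₁, A₂], ![B₁, B₂]] : Fin 2 → Fin 2 → Matrix (Fin 2) (Fin 2) F) k l i j
      = ∑ s, uu s k * vv s i * ww s l * zz s j from hh k i l j]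
    exact Finset.sum_congr rfl (fun s _ => by ring)
  by_cases hW : w 0 0 * w 1 1 - w 0 1 * w 1 0 = 0
  · obtain ⟨xx, c, d, hc, hd⟩ := dep2 (w 0) (w 1) hW
    obtain ⟨uu, vv, ww, zz, hh⟩ := deg_core Good h_sq h_sqrt h_q2
      (fun k a b c' => (![![A₁, A₂], ![B₁, B₂]] :
        Fin 2 → Fin 2 → Matrix (Fin 2) (Fin 2) F) k c' b a) xx
      (fun b c' => c * (u 0 c' * v 0 b) + d * (u 1 c' * v 1 b))
      (fun a b c' => by
        show (![![A₁, A₂], ![B₁, B₂]] : Fin 2 → Fin 2 → Matrix (Fin 2) (Fin 2) F) 0 c' b a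
          = xx a * (c * (u 0 c' * v 0 b) + d * (u 1 c' * v 1 b))
        rw [hA' c' b a, hc a, hd a]; ring)
    refine ⟨uu, zz, ww, vv, fun k l i j => ?_⟩
    rw [show (![![A₁, A₂], ![B₁, B₂]] : Fin 2 → Fin 2 → Matrix (Fin 2) (Fin 2) F) k l i j
      = ∑ s, uu s k * vv s j * ww s i * zz s l from hh k j i l]
    exact Finset.sum_congr rfl (fun s _ => by ring)
  · exact main_core Good h_sq h_sqrt h_q4 _ u v w hA'
      (mul_ne_zero (mul_ne_zero hU hV) hW)

section Real

lemma real_q2 : ∀ c2 c1 c0 : ℝ, 0 < c2 → ∃ t : ℝ, t ≠ 0 ∧ 0 < c2*t^2 + c1*t + c0 := by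
  intro c2 c1 c0 h
  refine ⟨(|c1| + |c0| + 1)/c2 + 1, by positivity, ?_⟩
  set t := (|c1| + |c0| + 1)/c2 + 1 with ht
  have ht1 : 1 ≤ t := by
    rw [ht]
    have : 0 ≤ (|c1| + |c0| + 1)/c2 := by positivity
    linarith
  have htc : c2 * t = |c1| + |c0| + 1 + c2 := by
    rw [ht]
    field_simp
  have hsq : c2 * t^2 = (|c1| + |c0| + 1 + c2) * t := by
    calc c2 * t^2 = (c2 * t) * t := by ring
    _ = (|c1| + |c0| + 1 + c2) * t := by rw [htc]
  nlinarith [le_abs_self c1, neg_abs_le c1, le_abs_self c0, neg_abs_le c0,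
    abs_nonneg c1, abs_nonneg c0, mul_nonneg (abs_nonneg c0) (sub_nonneg.mpr ht1),
    mul_nonneg (add_nonneg (abs_nonneg c1) (by linarith [neg_abs_le c1] : (0:ℝ) ≤ |c1| + c1)) (by linarith : (0:ℝ) ≤ t)]

lemma real_q4 : ∀ c4 c3 c2 c1 c0 : ℝ, 0 < c4 →
    ∃ t : ℝ, 0 < c4*t^4 + c3*t^3 + c2*t^2 + c1*t + c0 := by
  intro c4 c3 c2 c1 c0 h
  refine ⟨(|c3| + |c2| + |c1| + |c0| + 1)/c4 + 1, ?_⟩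
  set t := (|c3| + |c2| + |c1| + |c0| + 1)/c4 + 1 with ht
  have ht1 : 1 ≤ t := by
    rw [ht]
    have : 0 ≤ (|c3| + |c2| + |c1| + |c0| + 1)/c4 := by positivity
    linarith
  have htc : c4 * t = |c3| + |c2| + |c1| + |c0| + 1 + c4 := by
    rw [ht]; field_simp
  have hsq : c4 * t^4 = (|c3| + |c2| + |c1| + |c0| + 1 + c4) * t^3 := by
    calc c4 * t^4 = (c4 * t) * t^3 := by ring
    _ = _ := by rw [htc]
  have ht3 : 1 ≤ t^3 := by nlinarith [sq_nonneg t, sq_nonneg (t-1), mul_nonneg (mul_nonneg (by linarith : (0:ℝ) ≤ t-1) (by linarith : (0:ℝ) ≤ t)) (by linarith : (0:ℝ) ≤ t)]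
  have ht32 : t^2 ≤ t^3 := by nlinarith
  have ht31 : t ≤ t^3 := by nlinarith
  nlinarith [le_abs_self c3, neg_abs_le c3, le_abs_self c2, neg_abs_le c2,
    le_abs_self c1, neg_abs_le c1, le_abs_self c0, neg_abs_le c0,
    mul_nonneg (abs_nonneg c3) (by linarith : (0:ℝ) ≤ t^3),
    mul_nonneg (abs_nonneg c2) (sub_nonneg.mpr ht32),
    mul_nonneg (abs_nonneg c1) (sub_nonneg.mpr ht31),
    mul_nonneg (abs_nonneg c0) (sub_nonneg.mpr ht3),
    mul_nonneg (add_nonneg (abs_nonneg c3) (by linarith [neg_abs_le c3] : (0:ℝ) ≤ |c3| + c3)) (by linarith : (0:ℝ) ≤ t^3),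
    mul_nonneg (add_nonneg (abs_nonneg c2) (by linarith [neg_abs_le c2] : (0:ℝ) ≤ |c2| + c2)) (by nlinarith : (0:ℝ) ≤ t^2),
    mul_nonneg (add_nonneg (abs_nonneg c1) (by linarith [neg_abs_le c1] : (0:ℝ) ≤ |c1| + c1)) (by linarith : (0:ℝ) ≤ t)]

end Real

section Cplx

lemma cplx_q2 : ∀ c2 c1 c0 : ℂ, c2 ≠ 0 → ∃ t : ℂ, t ≠ 0 ∧ c2*t^2 + c1*t + c0 ≠ 0 := by
  intro c2 c1 c0 h
  by_contra hc
  push_neg at hc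
  have e1 := hc 1 one_ne_zero
  have e2 := hc 2 two_ne_zero
  have e3 := hc 3 three_ne_zero
  exact h (by linear_combination e1/2 + e3/2 - e2)

lemma cplx_q4 : ∀ c4 c3 c2 c1 c0 : ℂ, c4 ≠ 0 →
    ∃ t : ℂ, c4*t^4 + c3*t^3 + c2*t^2 + c1*t + c0 ≠ 0 := by
  intro c4 c3 c2 c1 c0 h
  by_contra hc
  push_neg at hc
  have e0 := hc 0
  have e1 := hc 1
  have e2 := hc 2
  have e3 := hc 3
  have e4 := hc 4
  exact h (by linear_combination e0/24 + e4/24 - e1/6 - e3/6 + e2/4)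

end Cplx

theorem stmt14 :
    (∀ A₁ A₂ B₁ B₂ : Matrix (Fin 2) (Fin 2) ℝ,
        trank3 ![A₁, A₂] ≤ 2 → trank4 ![![A₁, A₂], ![B₁, B₂]] ≤ 4) ∧
    (∀ A₁ A₂ B₁ B₂ : Matrix (Fin 2) (Fin 2) ℂ,
        trank3 ![A₁, A₂] ≤ 2 → trank4 ![![A₁, A₂], ![B₁, B₂]] ≤ 4) := by
  constructor
  · intro A₁ A₂ B₁ B₂ h3
    refine master (fun x : ℝ => 0 < x) ?_ ?_ ?_ ?_ A₁ A₂ B₁ B₂ h3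
    · intro x hx; positivity
    · intro x hx
      exact ⟨Real.sqrt x, ne_of_gt (Real.sqrt_pos.mpr hx), Real.sq_sqrt hx.le⟩
    · exact real_q2
    · intro c4 c3 c2 c1 c0 h
      obtain ⟨t, ht⟩ := real_q4 c4 c3 c2 c1 c0 h
      exact ⟨t, ht⟩
  · intro A₁ A₂ B₁ B₂ h3
    refine master (fun x : ℂ => x ≠ 0) ?_ ?_ ?_ ?_ A₁ A₂ B₁ B₂ h3
    · intro x hx; exact pow_ne_zero 2 hx
    · intro x hx
      obtain ⟨s, hs⟩ := IsAlgClosed.exists_pow_nat_eq x (n := 2) (by norm_num)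
      refine ⟨s, ?_, hs⟩
      intro h0
      exact hx (by rw [← hs, h0]; ring)
    · exact cplx_q2
    · exact cplx_q4
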